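/- Let P, Q be regular ω-posets and φ : SP → SQ continuous. Define ←^φ_n = {(q,p) ∈ Q_n × P_n : φ ∩ (q̄_S × p̄_S) ≠ ∅}. Then (←^φ_n) is a thin arrow-sequence with φ = ⋂_n (←^φ_n)_S; moreover for every cap D of Q there exists n with D^{⟨←^φ_n} a cap of P. -/
import Mathlib


namespace OP

section OmegaPoset

variable (P : Type*) [PartialOrder P]

/-- The n-th cone of the poset: `cone 0` is the set of maximal elements. -/
def cone : ℕ → Set P
  | 0 => {p | ∀ q, ¬ p < q}
  | n + 1 => {p | ∀ q, p < q → q ∈ cone n}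

/-- The n-th level: atoms (minimal elements) of the n-th cone. -/
def level (n : ℕ) : Set P := {p | p ∈ cone P n ∧ ∀ q, q < p → q ∉ cone P n}

/-- An ω-poset: all levels finite and every element in some cone. -/
def IsOmegaPoset : Prop := (∀ n, (level P n).Finite) ∧ ∀ p : P, ∃ n, p ∈ cone P n

variable {P}

/-- `refines A C` : every element of `A` lies below some element of `C` (`A ≤ C`). -/
def refines (A C : Set P) : Prop := ∀ a ∈ A, ∃ c ∈ C, a ≤ c

/-- A cap is a subset refined by some level. -/
def IsCap (C : Set P) : Prop := ∃ n, refines (level P n) C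

/-- A selector meets every cap. -/
def IsSelector (S : Set P) : Prop := ∀ C : Set P, IsCap C → (S ∩ C).Nonempty

/-- `wedge p q` : `p` and `q` have a common lower bound. -/
def wedge (p q : P) : Prop := ∃ r, r ≤ p ∧ r ≤ q

def wedgeSet (p : P) : Set P := {q | wedge p q}

/-- The adjacency relation `p ⌅ q`. -/
def barwedge (p q : P) : Prop := ∀ C : Set P, IsCap C → ∃ c ∈ C, wedge p c ∧ wedge c q

/-- `p ⊲_C q`. -/
def starBelowOn (C : Set P) (p q : P) : Prop := ∀ c ∈ C, wedge p c → c ≤ q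

/-- The star-below relation `p ⊲ q`. -/
def starBelow (p q : P) : Prop := ∃ n, starBelowOn (level P n) p q

/-- A clique: pairwise adjacent set. -/
def IsClique (X : Set P) : Prop := ∀ p ∈ X, ∀ q ∈ X, barwedge p q

/-- Unbounded subset: meets `C^≥` for every cap `C`. -/
def IsUnbounded (X : Set P) : Prop := ∀ C : Set P, IsCap C → ∃ u ∈ X, ∃ c ∈ C, u ≤ c

variable (P)

/-- Regularity: every level is eventually star-refined by a later level. -/
def IsRegular : Prop :=
  ∀ m, ∃ n, m < n ∧ ∀ p ∈ level P n, ∃ q ∈ level P m, starBelow p q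

/-- The spectrum: minimal selectors. -/
def Spec : Set (Set P) := {S | IsSelector S ∧ ∀ T ⊆ S, IsSelector T → T = S}

def SpecT : Type _ := {S : Set P // S ∈ Spec P}

instance : TopologicalSpace (SpecT P) :=
  TopologicalSpace.generateFrom {U | ∃ p : P, U = {S : SpecT P | p ∈ S.1}}

/-- The clique-spectrum: unbounded maximal cliques. -/
def CliqueSpec : Set (Set P) :=
  {X | IsUnbounded X ∧ IsClique X ∧ ∀ Y : Set P, IsClique Y → X ⊆ Y → Y = X}

def CliqueSpecT : Type _ := {X : Set P // X ∈ CliqueSpec P}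

instance : TopologicalSpace (CliqueSpecT P) :=
  TopologicalSpace.generateFrom {U | ∃ p : P, U = {X : CliqueSpecT P | p ∉ X.1}}

variable {P}

/-- The basic open set `p_S`. -/
def pSOpen (p : P) : Set (SpecT P) := {S | p ∈ S.1}

/-- The closed set `p̄_S = {S : S ⊆ p^∧}`. -/
def pSBar (p : P) : Set (SpecT P) := {S | S.1 ⊆ wedgeSet p}

/-- Prime ω-poset: every basic open set is nonempty. -/
def IsPrimePoset (P : Type*) [PartialOrder P] : Prop := ∀ p : P, (pSOpen p).Nonempty

end OmegaPoset

end OP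

namespace OP

section Refiners

variable {P Q : Type*} [PartialOrder P] [PartialOrder Q]

/-- A refiner: every cap of `Q` is refined through the relation by some cap of `P`. -/
def IsRefinerRel (R : Q → P → Prop) : Prop :=
  ∀ C : Set Q, IsCap C → ∃ B : Set P, IsCap B ∧ ∀ b ∈ B, ∃ c ∈ C, R c b

/-- `∧`-preserving: `⊐ ∘ ∧ ∘ ⊏ ⊆ ∧`. -/
def WedgePres (R : Q → P → Prop) : Prop :=
  ∀ q p p' q', R q p → wedge p p' → R q' p' → wedge q q'

/-- `⌅`-preserving: `⊐ ∘ ⌅ ∘ ⊏ ⊆ ⌅`. -/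
def BarwedgePres (R : Q → P → Prop) : Prop :=
  ∀ q p p' q', R q p → barwedge p p' → R q' p' → barwedge q q'

/-- The star `⊐*` of a relation: `q ⊐* p` iff some cap `C` has `C ∩ p^∧ ⊏ q`. -/
def relStar (R : Q → P → Prop) (q : Q) (p : P) : Prop :=
  ∃ C : Set P, IsCap C ∧ ∀ c ∈ C, wedge p c → R q c

/-- Composition `▷ ∘ ⊐` with the star-above relation on `Q`. -/
def starAboveComp (R : Q → P → Prop) : Q → P → Prop :=
  fun q p => ∃ q', starBelow q' q ∧ R q' p

/-- A strong refiner: a `∧`-preserving refiner with `⊐ = ▷ * ⊐`. -/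
def IsStrongRefiner (R : Q → P → Prop) : Prop :=
  IsRefinerRel R ∧ WedgePres R ∧ ∀ q p, R q p ↔ relStar (starAboveComp R) q p

/-- `φ` is the continuous map associated to `R`, i.e. `φ(S) = S^{⊏ ⊲}`. -/
def specMapOf (R : Q → P → Prop) (φ : SpecT P → SpecT Q) : Prop :=
  ∀ S : SpecT P, (φ S).1 = {r : Q | ∃ p ∈ S.1, ∃ q, R q p ∧ starBelow q r}

/-- The relation `⊒_φ`: `q ⊒_φ p` iff `q̄_S ⊇ φ[p̄_S]`. -/
def relBarPhi (φ : SpecT P → SpecT Q) (q : Q) (p : P) : Prop :=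
  ∀ S : SpecT P, S ∈ pSBar p → φ S ∈ pSBar q

/-- The relation `⊐_φ`: `q ⊐_φ p` iff `q_S ⊇ φ[p̄_S]`. -/
def relPhi (φ : SpecT P → SpecT Q) (q : Q) (p : P) : Prop :=
  ∀ S : SpecT P, S ∈ pSBar p → φ S ∈ pSOpen q

/-- An arrow: a finite relation with `← ∘ ⌅` co-surjective. -/
def IsArrow (A : Q → P → Prop) : Prop :=
  {x : Q × P | A x.1 x.2}.Finite ∧ ∀ p : P, ∃ q p', A q p' ∧ barwedge p' p

/-- `A ≤ B` for relations: `A ⊆ ≤ ∘ B ∘ ≥`. -/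
def arrowLe (A B : Q → P → Prop) : Prop :=
  ∀ q p, A q p → ∃ q' p', q ≤ q' ∧ p ≤ p' ∧ B q' p'

/-- The relation `⟨←` of an arrow: `q ⟨← p` iff `p^{⌅→} ⊲ q`. -/
def angleRel (A : Q → P → Prop) (q : Q) (p : P) : Prop :=
  ∀ q', (∃ p', barwedge p p' ∧ A q' p') → starBelow q' q

/-- The relation `⋂ₙ (←ₙ)̄_S` on spectra determined by a sequence of arrows. -/
def seqGraph (A : ℕ → Q → P → Prop) (T : SpecT Q) (S : SpecT P) : Prop :=
  ∀ n, ∃ q p, A n q p ∧ T.1 ⊆ wedgeSet q ∧ S.1 ⊆ wedgeSet p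

end Refiners

open scoped Classical

section Basic

variable {P : Type*} [PartialOrder P]

theorem cone_succ {p : P} {n : ℕ} (h : p ∈ cone P n) : p ∈ cone P (n + 1) := by
  induction n generalizing p with
  | zero => exact fun q hq => absurd hq (h q)
  | succ n ih => exact fun q hq => ih (h q hq)

theorem cone_mono {p : P} {m n : ℕ} (hmn : m ≤ n) (h : p ∈ cone P m) : p ∈ cone P n := by
  induction n with
  | zero => simpa [Nat.le_zero.1 hmn] using h
  | succ n ih =>
    rcases Nat.eq_or_lt_of_le hmn with rfl | hlt
    · exact h
    · exact cone_succ (ih (Nat.lt_succ_iff.1 hlt))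

theorem wedge_symm {p q : P} (h : wedge p q) : wedge q p := by
  obtain ⟨r, h1, h2⟩ := h; exact ⟨r, h2, h1⟩

theorem wedge_refl (p : P) : wedge p p := ⟨p, le_rfl, le_rfl⟩

theorem wedge_of_le_le {r p q : P} (h1 : r ≤ p) (h2 : r ≤ q) : wedge p q := ⟨r, h1, h2⟩

theorem wedge_mono {p p' q q' : P} (hp : p ≤ p') (hq : q ≤ q') (h : wedge p q) :
    wedge p' q' := by obtain ⟨r, h1, h2⟩ := h; exact ⟨r, h1.trans hp, h2.trans hq⟩

theorem wedgeSet_mono {p p' : P} (hp : p ≤ p') : wedgeSet p ⊆ wedgeSet p' :=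
  fun _ hq => wedge_mono hp le_rfl hq

/-- The minimal cone index. -/
noncomputable def coneIdx (hP : IsOmegaPoset P) (p : P) : ℕ := Nat.find (hP.2 p)

theorem coneIdx_spec (hP : IsOmegaPoset P) (p : P) : p ∈ cone P (coneIdx hP p) :=
  Nat.find_spec (hP.2 p)

theorem coneIdx_le {p : P} {n : ℕ} (hP : IsOmegaPoset P) (h : p ∈ cone P n) :
    coneIdx hP p ≤ n := Nat.find_le h

theorem coneIdx_lt {p q : P} (hP : IsOmegaPoset P) (h : q < p) :
    coneIdx hP p < coneIdx hP q := by
  have hq := coneIdx_spec hP q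
  rcases hn : coneIdx hP q with _ | m
  · rw [hn] at hq; exact absurd h (hq p)
  · rw [hn] at hq
    have h2 : coneIdx hP p ≤ m := coneIdx_le hP (hq p h)
    omega

/-- Every element of the `n`-th cone is above an element of the `n`-th level. -/
theorem exists_level_le (hP : IsOmegaPoset P) {q : P} {n : ℕ} (h : q ∈ cone P n) :
    ∃ p ∈ level P n, p ≤ q := by
  have key : ∀ k (q : P), q ∈ cone P n → n - coneIdx hP q ≤ k → ∃ p ∈ level P n, p ≤ q := by
    intro k
    induction k with
    | zero =>
      intro q hq hk
      by_cases hlev : ∀ t, t < q → t ∉ cone P n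
      · exact ⟨q, ⟨hq, hlev⟩, le_rfl⟩
      · push_neg at hlev
        obtain ⟨t, ht, htc⟩ := hlev
        have h1 : coneIdx hP q < coneIdx hP t := coneIdx_lt hP ht
        have h2 : coneIdx hP t ≤ n := coneIdx_le hP htc
        have h3 : coneIdx hP q ≤ n := coneIdx_le hP hq
        omega
    | succ k ih =>
      intro q hq hk
      by_cases hlev : ∀ t, t < q → t ∉ cone P n
      · exact ⟨q, ⟨hq, hlev⟩, le_rfl⟩
      · push_neg at hlev
        obtain ⟨t, ht, htc⟩ := hlev
        have h1 : coneIdx hP q < coneIdx hP t := coneIdx_lt hP ht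
        have h2 : coneIdx hP t ≤ n := coneIdx_le hP htc
        obtain ⟨p, hp, hpt⟩ := ih t htc (by omega)
        exact ⟨p, hp, hpt.trans ht.le⟩
  exact key (n - coneIdx hP q) q h le_rfl

/-- Every element of level `n+1` is below an element of level `n`. -/
theorem exists_level_ge_succ {r : P} {n : ℕ} (h : r ∈ level P (n + 1)) :
    ∃ c ∈ level P n, r ≤ c := by
  obtain ⟨hr1, hr2⟩ := h
  by_cases hc : r ∈ cone P n
  · exact ⟨r, ⟨hc, fun t ht htc => hr2 t ht (cone_succ htc)⟩, le_rfl⟩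
  · cases n with
    | zero =>
      have hs : ∃ s, r < s := by
        by_contra hs; push_neg at hs
        exact hc fun q => hs q
      obtain ⟨s, hs⟩ := hs
      have hs0 : s ∈ cone P 0 := hr1 s hs
      exact ⟨s, ⟨hs0, fun t ht htc => htc s ht⟩, hs.le⟩
    | succ m =>
      have hs : ∃ s, r < s ∧ s ∉ cone P m := by
        by_contra hs; push_neg at hs
        exact hc fun q hq => hs q hq
      obtain ⟨s, hs, hsm⟩ := hs
      have hs1 : s ∈ cone P (m + 1) := hr1 s hs
      refine ⟨s, ⟨hs1, fun t ht htc => hsm (htc s ht)⟩, hs.le⟩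

/-- Levels refine earlier levels. -/
theorem exists_level_ge (hP : IsOmegaPoset P) {r : P} {m k : ℕ} (hk : k ≤ m)
    (h : r ∈ level P m) : ∃ c ∈ level P k, r ≤ c := by
  have key : ∀ j (r : P), r ∈ level P (k + j) → ∃ c ∈ level P k, r ≤ c := by
    intro j
    induction j with
    | zero => exact fun r hr => ⟨r, hr, le_rfl⟩
    | succ j ih =>
      intro r hr
      obtain ⟨c, hc, hrc⟩ := exists_level_ge_succ (n := k + j) hr
      obtain ⟨c', hc', hcc'⟩ := ih c hc
      exact ⟨c', hc', hrc.trans hcc'⟩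
  obtain ⟨j, rfl⟩ := Nat.exists_eq_add_of_le hk
  exact key j r h

theorem isCap_level (n : ℕ) : IsCap (level P n) :=
  ⟨n, fun a ha => ⟨a, ha, le_rfl⟩⟩

theorem isCap_superset {C C' : Set P} (h : IsCap C) (hsub : C ⊆ C') : IsCap C' := by
  obtain ⟨n, hn⟩ := h
  exact ⟨n, fun a ha => by obtain ⟨c, hc, hac⟩ := hn a ha; exact ⟨c, hsub hc, hac⟩⟩

/-- A cap is refined by all sufficiently deep levels; in fact by any level `≥` its index. -/
theorem cap_refines (hP : IsOmegaPoset P) {C : Set P} (h : IsCap C) :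
    ∃ n₀, ∀ m, n₀ ≤ m → refines (level P m) C := by
  obtain ⟨n, hn⟩ := h
  refine ⟨n, fun m hm a ha => ?_⟩
  obtain ⟨c, hc, hac⟩ := exists_level_ge hP hm ha
  obtain ⟨c', hc', hcc'⟩ := hn c hc
  exact ⟨c', hc', hac.trans hcc'⟩

theorem isCap_univ [Inhabited P] : IsCap (Set.univ : Set P) :=
  ⟨0, fun a _ => ⟨a, trivial, le_rfl⟩⟩

/-- `wedge` implies `barwedge`. -/
theorem wedge_barwedge (hP : IsOmegaPoset P) {p q : P} (h : wedge p q) : barwedge p q := by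
  obtain ⟨r, hrp, hrq⟩ := h
  intro C hC
  obtain ⟨n₀, hn₀⟩ := cap_refines hP hC
  set m := max n₀ (coneIdx hP r) with hm
  have hrc : r ∈ cone P m := cone_mono (le_max_right _ _) (coneIdx_spec hP r)
  obtain ⟨u, hu, hur⟩ := exists_level_le hP hrc
  obtain ⟨c, hc, huc⟩ := hn₀ m (le_max_left _ _) u hu
  exact ⟨c, hc, ⟨u, hur.trans hrp, huc⟩, ⟨u, huc, hur.trans hrq⟩⟩

theorem barwedge_mono {p p' q q' : P} (hp : p ≤ p') (hq : q ≤ q') (h : barwedge p q) :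
    barwedge p' q' := by
  intro C hC
  obtain ⟨c, hc, h1, h2⟩ := h C hC
  exact ⟨c, hc, wedge_mono hp le_rfl h1, wedge_mono le_rfl hq h2⟩

/-- Raising the witness level of `starBelowOn`. -/
theorem starBelowOn_raise (hP : IsOmegaPoset P) {p w : P} {k k' : ℕ} (hk : k ≤ k')
    (h : starBelowOn (level P k) p w) : starBelowOn (level P k') p w := by
  intro c hc hwc
  obtain ⟨c', hc', hcc'⟩ := exists_level_ge hP hk hc
  exact hcc'.trans (h c' hc' (wedge_mono le_rfl hcc' hwc))

theorem starBelowOn_le_right {C : Set P} {p w w' : P} (hw : w ≤ w')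
    (h : starBelowOn C p w) : starBelowOn C p w' :=
  fun c hc hwc => (h c hc hwc).trans hw

theorem starBelowOn_le_left {C : Set P} {p p' w : P} (hp : p ≤ p')
    (h : starBelowOn C p' w) : starBelowOn C p w :=
  fun c hc hwc => h c hc (wedge_mono hp le_rfl hwc)

end Basic
section Spec

variable {P : Type*} [PartialOrder P]

theorem sel_meets_level {S : Set P} (hS : IsSelector S) (n : ℕ) :
    ∃ v, v ∈ S ∧ v ∈ level P n := by
  obtain ⟨v, hv1, hv2⟩ := hS (level P n) (isCap_level n)
  exact ⟨v, hv1, hv2⟩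

theorem private_cap {S : Set P} (hS : S ∈ Spec P) {s : P} (hs : s ∈ S) :
    ∃ C, IsCap C ∧ S ∩ C ⊆ {s} := by
  by_contra h
  push_neg at h
  have hsel : IsSelector (S \ {s}) := by
    intro C hC
    obtain ⟨x, hxSC, hxs⟩ := Set.not_subset.1 (h C hC)
    exact ⟨x, ⟨hxSC.1, hxs⟩, hxSC.2⟩
  have heq := hS.2 (S \ {s}) Set.diff_subset hsel
  have : s ∈ S \ {s} := by rw [heq]; exact hs
  exact this.2 rfl

theorem spec_upClosed {S : Set P} (hS : S ∈ Spec P) {s u : P} (hs : s ∈ S)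
    (hsu : s ≤ u) : u ∈ S := by
  by_contra hu
  obtain ⟨C, hC, hpriv⟩ := private_cap hS hs
  obtain ⟨n, hn⟩ := hC
  have hcap : IsCap ((C \ {s}) ∪ {u}) := by
    refine ⟨n, fun a ha => ?_⟩
    obtain ⟨c, hc, hac⟩ := hn a ha
    by_cases hcs : c = s
    · exact ⟨u, Or.inr rfl, by rw [hcs] at hac; exact hac.trans hsu⟩
    · exact ⟨c, Or.inl ⟨hc, hcs⟩, hac⟩
  obtain ⟨x, hxS, hx⟩ := hS.1 _ hcap
  rcases hx with ⟨hxC, hxs⟩ | hxu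
  · exact hxs (hpriv ⟨hxS, hxC⟩)
  · exact hu (hxu ▸ hxS)

/-- Key lemma: in a minimal selector, any two elements (and any cap) have a common
lower bound within the selector. -/
theorem spec_common (hP : IsOmegaPoset P) {S : Set P} (hS : S ∈ Spec P) {s t : P}
    (hs : s ∈ S) (ht : t ∈ S) {C : Set P} (hC : IsCap C) :
    ∃ v ∈ S, v ≤ s ∧ v ≤ t ∧ ∃ c ∈ C, v ≤ c := by
  obtain ⟨Cs, hCs, hCspriv⟩ := private_cap hS hs
  obtain ⟨Ct, hCt, hCtpriv⟩ := private_cap hS ht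
  obtain ⟨n1, h1⟩ := cap_refines hP hCs
  obtain ⟨n2, h2⟩ := cap_refines hP hCt
  obtain ⟨n3, h3⟩ := cap_refines hP hC
  set m := max (max n1 n2) n3 with hm
  obtain ⟨v, hvS, hvm⟩ := sel_meets_level hS.1 m
  obtain ⟨c1, hc1, hvc1⟩ := h1 m (by omega) v hvm
  obtain ⟨c2, hc2, hvc2⟩ := h2 m (by omega) v hvm
  obtain ⟨c3, hc3, hvc3⟩ := h3 m (by omega) v hvm
  have hc1S : c1 ∈ S := spec_upClosed hS hvS hvc1
  have hc2S : c2 ∈ S := spec_upClosed hS hvS hvc2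
  have e1 : c1 = s := hCspriv ⟨hc1S, hc1⟩
  have e2 : c2 = t := hCtpriv ⟨hc2S, hc2⟩
  exact ⟨v, hvS, e1 ▸ hvc1, e2 ▸ hvc2, c3, hc3, hvc3⟩

theorem spec_wedge (hP : IsOmegaPoset P) {S : Set P} (hS : S ∈ Spec P) {s t : P}
    (hs : s ∈ S) (ht : t ∈ S) : wedge s t := by
  obtain ⟨v, _, h1, h2, _⟩ := spec_common hP hS hs ht (isCap_level 0)
  exact ⟨v, h1, h2⟩

theorem spec_hat (hP : IsOmegaPoset P) {S : Set P} (hS : S ∈ Spec P) {q : P}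
    (hq : q ∈ S) : S ⊆ wedgeSet q :=
  fun _ ht => spec_wedge hP hS hq ht

/-- In a regular ω-poset, every element of a minimal selector is star-above another
element of the selector. -/
theorem spec_star (hP : IsOmegaPoset P) (hreg : IsRegular P) {S : Set P}
    (hS : S ∈ Spec P) {s : P} (hs : s ∈ S) :
    ∃ v ∈ S, ∃ K, starBelowOn (level P K) v s := by
  obtain ⟨C0, hC0, hpriv⟩ := private_cap hS hs
  have hE : IsCap {x : P | x ∉ S ∨ x ≤ s} := by
    refine isCap_superset hC0 fun c hc => ?_
    by_cases hcS : c ∈ S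
    · exact Or.inr (le_of_eq (hpriv ⟨hcS, hc⟩))
    · exact Or.inl hcS
  obtain ⟨m, hm⟩ := cap_refines hP hE
  obtain ⟨n, hnm, hstar⟩ := hreg m
  obtain ⟨v, hvS, hvn⟩ := sel_meets_level hS.1 n
  obtain ⟨w, hwm, K0, hK0⟩ := hstar v hvn
  -- w ∈ S
  obtain ⟨z, hzS, hzK0⟩ := sel_meets_level hS.1 K0
  have hvz : wedge v z := spec_wedge hP hS hvS hzS
  have hzw : z ≤ w := hK0 z hzK0 hvz
  have hwS : w ∈ S := spec_upClosed hS hzS hzw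
  -- w ≤ s
  obtain ⟨e, he, hwe⟩ := hm m le_rfl w hwm
  have hws : w ≤ s := by
    rcases he with heS | hes
    · exact absurd (spec_upClosed hS hwS hwe) heS
    · exact hwe.trans hes
  exact ⟨v, hvS, K0, starBelowOn_le_right hws hK0⟩

end Spec
section Zorn

variable {P : Type*} [PartialOrder P]

/-- A common lower bound in a chain for finitely many constraints. -/
theorem chain_finset_lb {c : Set (Set P)} (hchain : IsChain (· ⊆ ·) c)
    (t : Finset P) (ht : ∀ x ∈ t, ∃ T ∈ c, x ∉ T) (hne : t.Nonempty) :
    ∃ T ∈ c, ∀ x ∈ t, x ∉ T := by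
  classical
  induction t using Finset.induction with
  | empty => exact absurd hne (by simp)
  | @insert a u ha ih =>
    obtain ⟨T1, hT1c, hT1⟩ := ht a (Finset.mem_insert_self a u)
    rcases u.eq_empty_or_nonempty with rfl | hune
    · exact ⟨T1, hT1c, by simpa using hT1⟩
    · obtain ⟨T2, hT2c, hT2⟩ := ih (fun x hx => ht x (Finset.mem_insert_of_mem hx)) hune
      rcases eq_or_ne T1 T2 with rfl | hne12
      · refine ⟨T1, hT1c, fun x hx => ?_⟩
        rcases Finset.mem_insert.1 hx with rfl | hxu
        · exact hT1
        · exact hT2 x hxu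
      rcases hchain hT1c hT2c hne12 with h12 | h21
      · refine ⟨T1, hT1c, fun x hx => ?_⟩
        rcases Finset.mem_insert.1 hx with rfl | hxu
        · exact hT1
        · exact fun hxT1 => hT2 x hxu (h12 hxT1)
      · refine ⟨T2, hT2c, fun x hx => ?_⟩
        rcases Finset.mem_insert.1 hx with rfl | hxu
        · exact fun hxT2 => hT1 (h21 hxT2)
        · exact hT2 x hxu

/-- Every selector contains a minimal selector. -/
theorem exists_spec_subset (hP : IsOmegaPoset P) {S₀ : Set P} (hS₀ : IsSelector S₀) :
    ∃ S, S ∈ Spec P ∧ S ⊆ S₀ := by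
  classical
  have hchainlb : ∀ c ⊆ {T : Set P | IsSelector T}, IsChain (· ⊆ ·) c → c.Nonempty →
      ∃ lb ∈ {T : Set P | IsSelector T}, ∀ s ∈ c, lb ⊆ s := by
    intro c hcsel hchain hcne
    refine ⟨⋂₀ c, fun C hC => ?_, fun s hs => Set.sInter_subset_of_mem hs⟩
    obtain ⟨n, hn⟩ := hC
    set g : P → P := fun r => if h : ∃ c' ∈ C, r ≤ c' then Classical.choose h else r with hg
    have hgC : ∀ r ∈ level P n, g r ∈ C ∧ r ≤ g r := by
      intro r hr
      obtain ⟨c', hc', hrc'⟩ := hn r hr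
      have hex : ∃ c' ∈ C, r ≤ c' := ⟨c', hc', hrc'⟩
      simp only [hg, dif_pos hex]
      exact ⟨(Classical.choose_spec hex).1, (Classical.choose_spec hex).2⟩
    set C' : Set P := g '' (level P n) with hC'
    have hC'fin : C'.Finite := (hP.1 n).image g
    have hC'cap : IsCap C' := ⟨n, fun r hr => ⟨g r, ⟨r, hr, rfl⟩, (hgC r hr).2⟩⟩
    have hC'sub : C' ⊆ C := by
      rintro x ⟨r, hr, rfl⟩; exact (hgC r hr).1
    have key : ∃ x ∈ C', ∀ T ∈ c, x ∈ T := by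
      by_contra hk
      push_neg at hk
      have ht : ∀ x ∈ hC'fin.toFinset, ∃ T ∈ c, x ∉ T := by
        intro x hx
        exact hk x (hC'fin.mem_toFinset.1 hx)
      obtain ⟨T0, hT0c⟩ := hcne
      obtain ⟨y, hyT0, hyC'⟩ := (hcsel hT0c) C' hC'cap
      have htne : hC'fin.toFinset.Nonempty := ⟨y, hC'fin.mem_toFinset.2 hyC'⟩
      obtain ⟨T, hTc, hT⟩ := chain_finset_lb hchain hC'fin.toFinset ht htne
      obtain ⟨z, hzT, hzC'⟩ := (hcsel hTc) C' hC'cap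
      exact hT z (hC'fin.mem_toFinset.2 hzC') hzT
    obtain ⟨x, hxC', hx⟩ := key
    exact ⟨x, fun T hT => hx T hT, hC'sub hxC'⟩
  obtain ⟨m, hmsub, hmin⟩ := zorn_superset_nonempty {T : Set P | IsSelector T} hchainlb S₀ hS₀
  refine ⟨m, ⟨hmin.prop, fun T hTm hT => Set.Subset.antisymm hTm (hmin.2 hT hTm)⟩, hmsub⟩

/-- A decreasing sequence of elements hitting arbitrarily deep levels generates a selector. -/
theorem thread_selector (hP : IsOmegaPoset P) (x : ℕ → P)
    (hmono : ∀ i j, i ≤ j → x j ≤ x i)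
    (hx : ∀ j₀, ∃ i j, j₀ ≤ j ∧ x i ∈ level P j) :
    IsSelector {y | ∀ i, wedge y (x i)} := by
  intro C hC
  obtain ⟨n₀, hn₀⟩ := cap_refines hP hC
  obtain ⟨i, j, hj, hij⟩ := hx n₀
  obtain ⟨c, hc, hxc⟩ := hn₀ j hj (x i) hij
  refine ⟨c, fun i' => ?_, hc⟩
  rcases le_total i i' with h | h
  · exact ⟨x i', (hmono i i' h).trans hxc, le_rfl⟩
  · exact ⟨x i, hxc, hmono i' i h⟩

end Zorn
section Desc

variable {P : Type*} [PartialOrder P]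

open scoped Classical

/-- A choice of a level-`m` element below `y`. -/
noncomputable def dstep (m : ℕ) (y : P) : P :=
  if h : ∃ z, z ∈ level P m ∧ z ≤ y then Classical.choose h else y

theorem dstep_spec (hP : IsOmegaPoset P) {m : ℕ} {y : P} (hy : y ∈ cone P m) :
    dstep m y ∈ level P m ∧ dstep m y ≤ y := by
  have h : ∃ z, z ∈ level P m ∧ z ≤ y := by
    obtain ⟨z, hz, hzy⟩ := exists_level_le hP hy
    exact ⟨z, hz, hzy⟩
  rw [dstep, dif_pos h]
  exact Classical.choose_spec h

/-- Downward sequence from a level element. -/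
noncomputable def dseq (p : P) (n : ℕ) : ℕ → P
  | 0 => p
  | i + 1 => dstep (n + i + 1) (dseq p n i)

theorem dseq_level (hP : IsOmegaPoset P) {p : P} {n : ℕ} (hp : p ∈ level P n) :
    ∀ i, dseq p n i ∈ level P (n + i)
  | 0 => hp
  | i + 1 => (dstep_spec hP (cone_succ (dseq_level hP hp i).1)).1

theorem dseq_step (hP : IsOmegaPoset P) {p : P} {n : ℕ} (hp : p ∈ level P n) (i : ℕ) :
    dseq p n (i + 1) ≤ dseq p n i :=
  (dstep_spec hP (cone_succ (dseq_level hP hp i).1)).2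

theorem dseq_mono (hP : IsOmegaPoset P) {p : P} {n : ℕ} (hp : p ∈ level P n) :
    ∀ i j, i ≤ j → dseq p n j ≤ dseq p n i := by
  intro i j hij
  induction j with
  | zero => simp_all
  | succ j ih =>
    rcases Nat.eq_or_lt_of_le hij with rfl | hlt
    · rfl
    · exact (dseq_step hP hp j).trans (ih (Nat.lt_succ_iff.1 hlt))

/-- For every level element `p` there is a point of the spectrum inside `p^∧`. -/
theorem exists_spec_wedgeSet (hP : IsOmegaPoset P) {p : P} {n : ℕ} (hp : p ∈ level P n) :
    ∃ S, S ∈ Spec P ∧ S ⊆ wedgeSet p := by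
  have hsel : IsSelector {y | ∀ i, wedge y (dseq p n i)} := by
    refine thread_selector hP _ (dseq_mono hP hp) fun j₀ => ?_
    exact ⟨j₀, n + j₀, Nat.le_add_left _ _, dseq_level hP hp j₀⟩
  obtain ⟨S, hS, hsub⟩ := exists_spec_subset hP hsel
  refine ⟨S, hS, fun y hy => ?_⟩
  exact wedge_symm ((hsub hy) 0)

end Desc
section Anc

variable {P : Type*} [PartialOrder P]

open scoped Classical

/-- A choice of a level-`k` element above `x`. -/
noncomputable def ustep (k : ℕ) (x : P) : P :=
  if h : ∃ c, c ∈ level P k ∧ x ≤ c then Classical.choose h else x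

theorem ustep_spec (hP : IsOmegaPoset P) {k m : ℕ} {x : P} (hk : k ≤ m) (hx : x ∈ level P m) :
    ustep k x ∈ level P k ∧ x ≤ ustep k x := by
  have h : ∃ c, c ∈ level P k ∧ x ≤ c := by
    obtain ⟨c, hc, hxc⟩ := exists_level_ge hP hk hx
    exact ⟨c, hc, hxc⟩
  rw [ustep, dif_pos h]
  exact Classical.choose_spec h

/-- Iterated ancestors: `anc j k x` raises `x` from level `k + j` to level `k`. -/
noncomputable def anc : ℕ → ℕ → P → P
  | 0, _, x => x
  | j + 1, k, x => ustep k (anc j (k + 1) x)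

theorem anc_spec (hP : IsOmegaPoset P) :
    ∀ (j k : ℕ) (x : P), x ∈ level P (k + j) → anc j k x ∈ level P k ∧ x ≤ anc j k x := by
  intro j
  induction j with
  | zero => exact fun k x hx => ⟨hx, le_rfl⟩
  | succ j ih =>
    intro k x hx
    have hx' : x ∈ level P ((k + 1) + j) := by
      have : k + (j + 1) = (k + 1) + j := by omega
      rwa [this] at hx
    obtain ⟨h1, h2⟩ := ih (k + 1) x hx'
    have := ustep_spec hP (Nat.le_succ k) h1
    exact ⟨this.1, h2.trans this.2⟩

end Anc

section Thread

variable {P : Type*} [PartialOrder P]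

open scoped Classical

theorem ultra_finset_pick {α : Type*} (U : Ultrafilter ℕ) (g : ℕ → α) :
    ∀ (t : Finset α) (B : Set ℕ), B ∈ U → (∀ n ∈ B, g n ∈ t) →
      ∃ x ∈ t, {n | n ∈ B ∧ g n = x} ∈ U := by
  classical
  intro t
  induction t using Finset.induction with
  | empty =>
    intro B hB hgB
    obtain ⟨n, hn⟩ := U.nonempty_of_mem hB
    exact absurd (hgB n hn) (by simp)
  | @insert a u ha ih =>
    intro B hB hgB
    have hsplit : B ⊆ {n | n ∈ B ∧ g n = a} ∪ {n | n ∈ B ∧ g n ∈ u} := by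
      intro n hn
      rcases Finset.mem_insert.1 (hgB n hn) with h | h
      · exact Or.inl ⟨hn, h⟩
      · exact Or.inr ⟨hn, h⟩
    have hU : {n | n ∈ B ∧ g n = a} ∪ {n | n ∈ B ∧ g n ∈ u} ∈ U := U.toFilter.mem_of_superset hB hsplit
    rcases Ultrafilter.union_mem_iff.1 hU with h | h
    · exact ⟨a, Finset.mem_insert_self a u, h⟩
    · obtain ⟨x, hxu, hx⟩ := ih {n | n ∈ B ∧ g n ∈ u} h (fun n hn => hn.2)
      refine ⟨x, Finset.mem_insert_of_mem hxu, ?_⟩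
      refine U.toFilter.mem_of_superset hx ?_
      intro n hn; exact ⟨hn.1.1, hn.2⟩

/-- From a sequence of level elements extract a thread (a decreasing sequence through
all levels approximating infinitely many of them). -/
theorem exists_thread (hP : IsOmegaPoset P) (p : ℕ → P) (hp : ∀ n, p n ∈ level P n) :
    ∃ x : ℕ → P, (∀ k, x k ∈ level P k) ∧ (∀ i j, i ≤ j → x j ≤ x i) ∧
      (∀ k b, ∃ n, b ≤ n ∧ k ≤ n ∧ p n ≤ x k) := by
  classical
  set U : Ultrafilter ℕ := Ultrafilter.of Filter.atTop with hU
  have hatTop : ∀ k : ℕ, {n : ℕ | k ≤ n} ∈ U := by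
    intro k
    exact Ultrafilter.of_le Filter.atTop (Filter.mem_atTop k)
  set c : ℕ → ℕ → P := fun n k => anc (n - k) k (p n) with hc
  have hclev : ∀ {n k}, k ≤ n → c n k ∈ level P k ∧ p n ≤ c n k := by
    intro n k hkn
    have : p n ∈ level P (k + (n - k)) := by
      have : k + (n - k) = n := by omega
      rw [this]; exact hp n
    exact anc_spec hP (n - k) k (p n) this
  -- pick x k by the ultrafilter
  have hpick : ∀ k : ℕ, ∃ x ∈ (hP.1 k).toFinset, {n | n ∈ {n : ℕ | k ≤ n} ∧ c n k = x} ∈ U := by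
    intro k
    refine ultra_finset_pick U (fun n => c n k) (hP.1 k).toFinset {n : ℕ | k ≤ n} (hatTop k) ?_
    intro n hn
    exact (hP.1 k).mem_toFinset.2 (hclev hn).1
  choose x hxlev hxU using hpick
  have hxlev' : ∀ k, x k ∈ level P k := fun k => (hP.1 k).mem_toFinset.1 (hxlev k)
  -- step: x (k+1) ≤ x k
  have hstep : ∀ k, x (k + 1) ≤ x k := by
    intro k
    have hmem : {n | n ∈ {n : ℕ | k ≤ n} ∧ c n k = x k} ∩
        ({n | n ∈ {n : ℕ | k + 1 ≤ n} ∧ c n (k + 1) = x (k + 1)}) ∈ U :=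
      Filter.inter_mem (hxU k) (hxU (k + 1))
    obtain ⟨n, ⟨hn1, hn2⟩, hn3, hn4⟩ := U.nonempty_of_mem hmem
    have hkn : k + 1 ≤ n := hn3
    -- c n k = ustep k (c n (k+1))
    have hck : c n k = ustep k (c n (k + 1)) := by
      have h1 : n - k = (n - (k + 1)) + 1 := by omega
      have h2 : anc ((n - (k+1)) + 1) k (p n) = ustep k (anc (n - (k+1)) (k+1) (p n)) := rfl
      rw [hc]
      simp only
      rw [h1, h2]
    have hle : c n (k + 1) ≤ c n k := by
      rw [hck]
      exact (ustep_spec hP (Nat.le_succ k) (hclev hkn).1).2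
    calc x (k + 1) = c n (k + 1) := hn4.symm
      _ ≤ c n k := hle
      _ = x k := hn2
  have hmono : ∀ i j, i ≤ j → x j ≤ x i := by
    intro i j hij
    induction j with
    | zero => simp_all
    | succ j ih =>
      rcases Nat.eq_or_lt_of_le hij with rfl | hlt
      · rfl
      · exact (hstep j).trans (ih (Nat.lt_succ_iff.1 hlt))
  refine ⟨x, hxlev', hmono, fun k b => ?_⟩
  have hmem : {n | n ∈ {n : ℕ | k ≤ n} ∧ c n k = x k} ∩ {n : ℕ | b ≤ n} ∈ U :=
    Filter.inter_mem (hxU k) (hatTop b)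
  obtain ⟨n, ⟨hn1, hn2⟩, hn3⟩ := U.nonempty_of_mem hmem
  exact ⟨n, hn3, hn1, hn2 ▸ (hclev hn1).2⟩

end Thread
section Cont

variable {P : Type*} [PartialOrder P]

theorem generateOpen_mem {g : Set (Set (SpecT P))} {W : Set (SpecT P)}
    (hg : ∀ U ∈ g, ∃ p : P, U = {S : SpecT P | p ∈ S.1})
    (hW : TopologicalSpace.GenerateOpen g W) :
    ∀ S ∈ W, ∃ t : Finset P, (∀ y ∈ t, y ∈ S.1) ∧
      ∀ S' : SpecT P, (∀ y ∈ t, y ∈ S'.1) → S' ∈ W := by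
  classical
  induction hW with
  | basic U hU =>
    intro S hS
    obtain ⟨p, rfl⟩ := hg U hU
    exact ⟨{p}, by simpa using hS, fun S' h => by simpa using h p (Finset.mem_singleton_self p)⟩
  | univ => exact fun S _ => ⟨∅, by simp, fun S' _ => trivial⟩
  | inter U V hU hV ihU ihV =>
    intro S hS
    obtain ⟨t1, ht1, ht1'⟩ := ihU S hS.1
    obtain ⟨t2, ht2, ht2'⟩ := ihV S hS.2
    refine ⟨t1 ∪ t2, fun y hy => ?_, fun S' h => ?_⟩
    · rcases Finset.mem_union.1 hy with h | h
      · exact ht1 y h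
      · exact ht2 y h
    · exact ⟨ht1' S' fun y hy => h y (Finset.mem_union_left _ hy),
        ht2' S' fun y hy => h y (Finset.mem_union_right _ hy)⟩
  | sUnion 𝒯 h𝒯 ih =>
    intro S hS
    obtain ⟨U, hU𝒯, hSU⟩ := hS
    obtain ⟨t, ht, ht'⟩ := ih U hU𝒯 S hSU
    exact ⟨t, ht, fun S' h => ⟨U, hU𝒯, ht' S' h⟩⟩

theorem isOpen_pSOpen {Q : Type*} [PartialOrder Q] (v : Q) :
    IsOpen (pSOpen v : Set (SpecT Q)) :=
  TopologicalSpace.GenerateOpen.basic _ ⟨v, rfl⟩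

theorem cont_mem {Q : Type*} [PartialOrder Q] {φ : SpecT P → SpecT Q}
    (hφ : Continuous φ) {v : Q} {S : SpecT P} (hv : v ∈ (φ S).1) :
    ∃ t : Finset P, (∀ y ∈ t, y ∈ S.1) ∧
      ∀ S' : SpecT P, (∀ y ∈ t, y ∈ S'.1) → v ∈ (φ S').1 := by
  have hopen : IsOpen (φ ⁻¹' (pSOpen v)) := (isOpen_pSOpen v).preimage hφ
  have hgen : TopologicalSpace.GenerateOpen {U | ∃ p : P, U = {S : SpecT P | p ∈ S.1}}
      (φ ⁻¹' (pSOpen v)) := hopen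
  obtain ⟨t, ht, ht'⟩ := generateOpen_mem (fun U hU => hU) hgen S hv
  exact ⟨t, ht, ht'⟩

end Cont
section Close

variable {P : Type*} [PartialOrder P]

/-- If `S'` is a minimal selector sharing (up to `⌅`) a deep hat with `S`, then any
given element of `S` belongs to `S'`. -/
theorem mem_of_close (hP : IsOmegaPoset P) (hregP : IsRegular P) {S : Set P}
    (hS : S ∈ Spec P) {y : P} (hy : y ∈ S) :
    ∃ n, ∀ (S' : Set P), S' ∈ Spec P → ∀ p p', p ∈ level P n → p' ∈ level P n →
      S ⊆ wedgeSet p → S' ⊆ wedgeSet p' → barwedge p p' → y ∈ S' := by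
  obtain ⟨u₁, hu₁S, K₁, hK₁⟩ := spec_star hP hregP hS hy
  obtain ⟨u₂, hu₂S, K₂0, hK₂0⟩ := spec_star hP hregP hS hu₁S
  set K₂ := max K₂0 K₁ with hK₂def
  have hK₂ : starBelowOn (level P K₂) u₂ u₁ := starBelowOn_raise hP (le_max_left _ _) hK₂0
  obtain ⟨u₃, hu₃S, K₃0, hK₃0⟩ := spec_star hP hregP hS hu₂S
  set K₃ := max K₃0 K₂ with hK₃def
  have hK₃ : starBelowOn (level P K₃) u₃ u₂ := starBelowOn_raise hP (le_max_left _ _) hK₃0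
  obtain ⟨n, hngt, hstar⟩ := hregP K₃
  refine ⟨n, fun S' hS' p p' hp hp' hSp hS'p' hbar => ?_⟩
  obtain ⟨w, hwK₃, Np0, hNp0⟩ := hstar p hp
  obtain ⟨w', hw'K₃, Np'0, hNp'0⟩ := hstar p' hp'
  set N := max Np0 Np'0 with hNdef
  have hNp : starBelowOn (level P N) p w := starBelowOn_raise hP (le_max_left _ _) hNp0
  have hNp' : starBelowOn (level P N) p' w' := starBelowOn_raise hP (le_max_right _ _) hNp'0
  -- w ∈ S
  obtain ⟨z, hzS, hzN⟩ := sel_meets_level hS.1 N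
  have hzw : z ≤ w := hNp z hzN (hSp hzS)
  have hwS : w ∈ S := spec_upClosed hS hzS hzw
  -- w' ∈ S'
  obtain ⟨z₀, hz₀S', hz₀N⟩ := sel_meets_level hS'.1 N
  have hz₀w' : z₀ ≤ w' := hNp' z₀ hz₀N (hS'p' hz₀S')
  have hw'S' : w' ∈ S' := spec_upClosed hS' hz₀S' hz₀w'
  -- w ≤ u₂
  have hwu₂ : w ≤ u₂ := hK₃ w hwK₃ (spec_wedge hP hS hu₃S hwS)
  -- barwedge at level N
  obtain ⟨cc, hccN, hwpc, hwcp'⟩ := hbar (level P N) (isCap_level N)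
  have hccw : cc ≤ w := hNp cc hccN hwpc
  have hccw' : cc ≤ w' := hNp' cc hccN (wedge_symm hwcp')
  -- lift w' to level K₂
  obtain ⟨wh, hwhK₂, hw'wh⟩ := exists_level_ge hP (le_max_right K₃0 K₂) hw'K₃
  have hwhS' : wh ∈ S' := spec_upClosed hS' hw'S' hw'wh
  -- wh ≤ u₁
  have hwhu₁ : wh ≤ u₁ := hK₂ wh hwhK₂ ⟨cc, hccw.trans hwu₂, hccw'.trans hw'wh⟩
  have hu₁S' : u₁ ∈ S' := spec_upClosed hS' hwhS' hwhu₁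
  -- finish
  obtain ⟨z', hz'S', hz'K₁⟩ := sel_meets_level hS'.1 K₁
  have hz'y : z' ≤ y := hK₁ z' hz'K₁ (spec_wedge hP hS' hu₁S' hz'S')
  exact spec_upClosed hS' hz'S' hz'y

theorem finset_bound {α : Type*} (t : Finset α) (R : α → ℕ → Prop)
    (hmono : ∀ a n n', n ≤ n' → R a n → R a n') (h : ∀ a ∈ t, ∃ n, R a n) :
    ∃ n, ∀ a ∈ t, R a n := by
  classical
  induction t using Finset.induction with
  | empty => exact ⟨0, by simp⟩
  | @insert a u ha ih =>
    obtain ⟨n1, hn1⟩ := h a (Finset.mem_insert_self a u)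
    obtain ⟨n2, hn2⟩ := ih fun b hb => h b (Finset.mem_insert_of_mem hb)
    refine ⟨max n1 n2, fun b hb => ?_⟩
    rcases Finset.mem_insert.1 hb with rfl | hbu
    · exact hmono b n1 _ (le_max_left _ _) hn1
    · exact hmono b n2 _ (le_max_right _ _) (hn2 b hbu)

variable {Q : Type*} [PartialOrder Q]

/-- Continuity transfer: deep `⌅`-closeness of points implies closeness of images. -/
theorem close_push (hP : IsOmegaPoset P) (hregP : IsRegular P)
    (hQ : IsOmegaPoset Q) (hregQ : IsRegular Q)
    (φ : SpecT P → SpecT Q) (hφ : Continuous φ) (S : SpecT P) (m : ℕ) :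
    ∃ n, ∀ (S' : SpecT P) (p p' : P), p ∈ level P n → p' ∈ level P n →
      S.1 ⊆ wedgeSet p → S'.1 ⊆ wedgeSet p' → barwedge p p' →
      ∃ q ∈ level Q m, (φ S).1 ⊆ wedgeSet q ∧ (φ S').1 ⊆ wedgeSet q := by
  obtain ⟨qh, hqhT, hqhm⟩ := sel_meets_level (φ S).2.1 m
  obtain ⟨v, hvT, K, hK⟩ := spec_star hQ hregQ (φ S).2 hqhT
  obtain ⟨t, htS, htv⟩ := cont_mem hφ hvT
  set R : P → ℕ → Prop := fun y n => ∀ (S' : SpecT P) (p p' : P), p ∈ level P n →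
    p' ∈ level P n → S.1 ⊆ wedgeSet p → S'.1 ⊆ wedgeSet p' → barwedge p p' →
    y ∈ S'.1 with hR
  have hmono : ∀ y n n', n ≤ n' → R y n → R y n' := by
    intro y n n' hnn' hRn S' p p' hp hp' hSp hS'p' hbar
    obtain ⟨ph, hph, hpph⟩ := exists_level_ge hP hnn' hp
    obtain ⟨ph', hph', hp'ph'⟩ := exists_level_ge hP hnn' hp'
    exact hRn S' ph ph' hph hph' (hSp.trans (wedgeSet_mono hpph))
      (hS'p'.trans (wedgeSet_mono hp'ph')) (barwedge_mono hpph hp'ph' hbar)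
  have hRex : ∀ y ∈ t, ∃ n, R y n := by
    intro y hyt
    obtain ⟨n, hn⟩ := mem_of_close hP hregP S.2 (htS y hyt)
    exact ⟨n, fun S' p p' hp hp' hSp hS'p' hbar =>
      hn S'.1 S'.2 p p' hp hp' hSp hS'p' hbar⟩
  obtain ⟨n, hn⟩ := finset_bound t R hmono hRex
  refine ⟨n, fun S' p p' hp hp' hSp hS'p' hbar => ?_⟩
  have hvS' : v ∈ (φ S').1 := htv S' fun y hyt => hn y hyt S' p p' hp hp' hSp hS'p' hbar
  obtain ⟨z, hzS', hzK⟩ := sel_meets_level (φ S').2.1 K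
  have hzqh : z ≤ qh := hK z hzK (spec_wedge hQ (φ S').2 hvS' hzS')
  have hqhS' : qh ∈ (φ S').1 := spec_upClosed (φ S').2 hzS' hzqh
  exact ⟨qh, hqhm, spec_hat hQ (φ S).2 hqhT, spec_hat hQ (φ S').2 hqhS'⟩

end Close
section Main

variable {P Q : Type*} [PartialOrder P] [PartialOrder Q]

/-- The canonical arrow sequence of `φ`. -/
def arrSeq (φ : SpecT P → SpecT Q) (n : ℕ) : Q → P → Prop :=
  fun q p => q ∈ level Q n ∧ p ∈ level P n ∧
    ∃ S : SpecT P, S.1 ⊆ wedgeSet p ∧ (φ S).1 ⊆ wedgeSet q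

theorem arrSeq_isArrow (hP : IsOmegaPoset P) (hQ : IsOmegaPoset Q)
    (φ : SpecT P → SpecT Q) (n : ℕ) : IsArrow (arrSeq φ n) := by
  constructor
  · exact Set.Finite.subset ((hQ.1 n).prod (hP.1 n)) fun x hx => ⟨hx.1, hx.2.1⟩
  · intro p
    have hpc : p ∈ cone P (max (coneIdx hP p) n) :=
      cone_mono (le_max_left _ _) (coneIdx_spec hP p)
    obtain ⟨r, hr, hrp⟩ := exists_level_le hP hpc
    obtain ⟨p', hp', hrp'⟩ := exists_level_ge hP (le_max_right _ _) hr
    have hbar : barwedge p' p := wedge_barwedge hP ⟨r, hrp', hrp⟩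
    obtain ⟨S, hSspec, hSsub⟩ := exists_spec_wedgeSet hP hp'
    set Sx : SpecT P := ⟨S, hSspec⟩ with hSx
    obtain ⟨q, hqT, hqn⟩ := sel_meets_level (φ Sx).2.1 n
    exact ⟨q, p', ⟨hqn, hp', Sx, hSsub, spec_hat hQ (φ Sx).2 hqT⟩, hbar⟩

theorem arrSeq_arrowLe (hP : IsOmegaPoset P) (hQ : IsOmegaPoset Q)
    (φ : SpecT P → SpecT Q) (n : ℕ) : arrowLe (arrSeq φ (n + 1)) (arrSeq φ n) := by
  rintro q p ⟨hq, hp, S, h1, h2⟩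
  obtain ⟨q', hq', hqq'⟩ := exists_level_ge hQ (Nat.le_succ n) hq
  obtain ⟨p', hp', hpp'⟩ := exists_level_ge hP (Nat.le_succ n) hp
  exact ⟨q', p', hqq', hpp', hq', hp', S, h1.trans (wedgeSet_mono hpp'),
    h2.trans (wedgeSet_mono hqq')⟩

theorem arrSeq_graph (hP : IsOmegaPoset P) (hregP : IsRegular P)
    (hQ : IsOmegaPoset Q) (hregQ : IsRegular Q)
    (φ : SpecT P → SpecT Q) (hφ : Continuous φ) (S : SpecT P) (T : SpecT Q) :
    (∀ n, ∃ q p, arrSeq φ n q p ∧ q ∈ T.1 ∧ p ∈ S.1) ↔ T = φ S := by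
  constructor
  · intro h
    have key : T.1 ⊆ (φ S).1 := by
      intro t ht
      obtain ⟨v₁, hv₁T, K₁, hK₁⟩ := spec_star hQ hregQ T.2 ht
      obtain ⟨v₂, hv₂T, K₂, hK₂⟩ := spec_star hQ hregQ T.2 hv₁T
      obtain ⟨v₃, hv₃T, K₃, hK₃⟩ := spec_star hQ hregQ T.2 hv₂T
      obtain ⟨v₄, hv₄T, K₄, hK₄⟩ := spec_star hQ hregQ T.2 hv₃T
      obtain ⟨n₁, hn₁⟩ := close_push hP hregP hQ hregQ φ hφ S K₂
      obtain ⟨q₀, p₀, ⟨hq₀lv, hp₀lv, S'', hS''p, hS''q⟩, hq₀T, hp₀S⟩ := h (max n₁ K₄)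
      have hSp₀ : S.1 ⊆ wedgeSet p₀ := spec_hat hP S.2 hp₀S
      obtain ⟨ph, hphlev, hp₀ph⟩ := exists_level_ge hP (le_max_left n₁ K₄) hp₀lv
      obtain ⟨qh, hqhK₂, hφSqh, hφS''qh⟩ := hn₁ S'' ph ph hphlev hphlev
        (hSp₀.trans (wedgeSet_mono hp₀ph)) (hS''p.trans (wedgeSet_mono hp₀ph))
        (wedge_barwedge hP (wedge_refl ph))
      obtain ⟨h₄, hh₄K₄, hq₀h₄⟩ := exists_level_ge hQ (le_max_right n₁ K₄) hq₀lv
      have hTh₄ : T.1 ⊆ wedgeSet h₄ :=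
        (spec_hat hQ T.2 hq₀T).trans (wedgeSet_mono hq₀h₄)
      have hS''h₄ : (φ S'').1 ⊆ wedgeSet h₄ := hS''q.trans (wedgeSet_mono hq₀h₄)
      have hh₄v₃ : h₄ ≤ v₃ := hK₄ h₄ hh₄K₄ (wedge_symm (hTh₄ hv₄T))
      obtain ⟨z, hzS'', hzK₃⟩ := sel_meets_level (φ S'').2.1 K₃
      obtain ⟨b, hbh₄, hbz⟩ := hS''h₄ hzS''
      have hzv₂ : z ≤ v₂ := hK₃ z hzK₃ ⟨b, hbh₄.trans hh₄v₃, hbz⟩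
      have hv₂S'' : v₂ ∈ (φ S'').1 := spec_upClosed (φ S'').2 hzS'' hzv₂
      have hqhv₁ : qh ≤ v₁ := hK₂ qh hqhK₂ (wedge_symm (hφS''qh hv₂S''))
      obtain ⟨z', hz'φS, hz'K₁⟩ := sel_meets_level (φ S).2.1 K₁
      obtain ⟨b', hb'qh, hb'z'⟩ := hφSqh hz'φS
      have hz't : z' ≤ t := hK₁ z' hz'K₁ ⟨b', hb'qh.trans hqhv₁, hb'z'⟩
      exact spec_upClosed (φ S).2 hz'φS hz't
    exact Subtype.ext ((φ S).2.2 T.1 key T.2.1)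
  · rintro rfl n
    obtain ⟨p, hpS, hpn⟩ := sel_meets_level S.2.1 n
    obtain ⟨q, hqT, hqn⟩ := sel_meets_level (φ S).2.1 n
    exact ⟨q, p, ⟨hqn, hpn, S, spec_hat hP S.2 hpS, spec_hat hQ (φ S).2 hqT⟩, hqT, hpS⟩

theorem arrSeq_cap (hP : IsOmegaPoset P) (hregP : IsRegular P)
    (hQ : IsOmegaPoset Q) (hregQ : IsRegular Q)
    (φ : SpecT P → SpecT Q) (hφ : Continuous φ) (D : Set Q) (hD : IsCap D) :
    ∃ n, ∀ p ∈ level P n, ∃ d ∈ D, angleRel (arrSeq φ n) d p := by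
  by_contra hcon
  push_neg at hcon
  choose p hp hpfail using hcon
  obtain ⟨x, hxlev, hxmono, hxapprox⟩ := exists_thread hP p hp
  have hsel : IsSelector {y | ∀ i, wedge y (x i)} :=
    thread_selector hP x hxmono fun j₀ => ⟨j₀, j₀, le_rfl, hxlev j₀⟩
  obtain ⟨Ss, hSsspec, hSssub⟩ := exists_spec_subset hP hsel
  set Sx : SpecT P := ⟨Ss, hSsspec⟩ with hSxdef
  have hSwedge : ∀ k, Sx.1 ⊆ wedgeSet (x k) := fun k y hy => wedge_symm ((hSssub hy) k)
  obtain ⟨m₀, hm₀⟩ := cap_refines hQ hD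
  obtain ⟨c₀, hc₀T, hc₀lev⟩ := sel_meets_level (φ Sx).2.1 m₀
  obtain ⟨ds, hdsD, hc₀ds⟩ := hm₀ m₀ le_rfl c₀ hc₀lev
  obtain ⟨c₁, hc₁T, M₁, hM₁⟩ := spec_star hQ hregQ (φ Sx).2 hc₀T
  have hc₁d : starBelowOn (level Q M₁) c₁ ds := starBelowOn_le_right hc₀ds hM₁
  obtain ⟨c₂, hc₂T, M₂, hM₂⟩ := spec_star hQ hregQ (φ Sx).2 hc₁T
  obtain ⟨c₃, hc₃T, M₃, hM₃⟩ := spec_star hQ hregQ (φ Sx).2 hc₂T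
  obtain ⟨n₁, hn₁⟩ := close_push hP hregP hQ hregQ φ hφ Sx M₃
  obtain ⟨n₄, hn₄gt, hstarQ⟩ := hregQ M₁
  obtain ⟨ns, hnsb, hnsn₁, hpxle⟩ := hxapprox n₁ (max n₁ n₄)
  have hnsn₄ : n₄ ≤ ns := le_trans (le_max_right _ _) hnsb
  refine hpfail ns ds hdsD ?_
  rintro q' ⟨p', hbarpp', hq'lv, hp'lv, S', hS'p', hS'q'⟩
  -- lift p' to level n₁
  obtain ⟨pb, hpb, hp'pb⟩ := exists_level_ge hP (le_trans (le_max_left _ _) hnsb) hp'lv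
  have hbarx : barwedge (x n₁) pb := barwedge_mono hpxle hp'pb hbarpp'
  obtain ⟨q'', hq''M₃, hφSq'', hφS'q''⟩ := hn₁ S' (x n₁) pb (hxlev n₁) hpb
    (hSwedge n₁) (hS'p'.trans (wedgeSet_mono hp'pb)) hbarx
  have hq''c₂ : q'' ≤ c₂ := hM₃ q'' hq''M₃ (wedge_symm (hφSq'' hc₃T))
  obtain ⟨z, hzS', hzM₂⟩ := sel_meets_level (φ S').2.1 M₂
  obtain ⟨b, hbq'', hbz⟩ := hφS'q'' hzS'
  have hzc₁ : z ≤ c₁ := hM₂ z hzM₂ ⟨b, hbq''.trans hq''c₂, hbz⟩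
  have hc₁S' : c₁ ∈ (φ S').1 := spec_upClosed (φ S').2 hzS' hzc₁
  -- star on the Q side
  obtain ⟨a, han₄, hq'a⟩ := exists_level_ge hQ hnsn₄ hq'lv
  obtain ⟨w, hwM₁, Nw, hNw⟩ := hstarQ a han₄
  have hq'w : starBelowOn (level Q Nw) q' w := starBelowOn_le_left hq'a hNw
  obtain ⟨z', hz'S', hz'Nw⟩ := sel_meets_level (φ S').2.1 Nw
  have hz'w : z' ≤ w := hq'w z' hz'Nw (hS'q' hz'S')
  have hwS' : w ∈ (φ S').1 := spec_upClosed (φ S').2 hz'S' hz'w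
  have hwds : w ≤ ds := hc₁d w hwM₁ (spec_wedge hQ (φ S').2 hc₁S' hwS')
  exact ⟨Nw, starBelowOn_le_right hwds hq'w⟩

end Main
end OP

open OP in
/-- The canonical arrow-sequence `←^φ_n` of a continuous map `φ` is a thin
arrow-sequence with `φ = ⋂ₙ (←^φ_n)_S`, and for every cap `D` of `Q` there is `n`
with `D^{⟨←^φ_n}` a cap of `P`. -/
theorem stmt11 {P Q : Type*} [PartialOrder P] [PartialOrder Q]
    (hP : IsOmegaPoset P) (hregP : IsRegular P) (hQ : IsOmegaPoset Q) (hregQ : IsRegular Q)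
    (φ : SpecT P → SpecT Q) (hφ : Continuous φ) :
    (∀ n, IsArrow (fun (q : Q) (p : P) => q ∈ level Q n ∧ p ∈ level P n ∧
        ∃ S : SpecT P, S.1 ⊆ wedgeSet p ∧ (φ S).1 ⊆ wedgeSet q)) ∧
    (∀ n, arrowLe
        (fun (q : Q) (p : P) => q ∈ level Q (n + 1) ∧ p ∈ level P (n + 1) ∧
          ∃ S : SpecT P, S.1 ⊆ wedgeSet p ∧ (φ S).1 ⊆ wedgeSet q)
        (fun (q : Q) (p : P) => q ∈ level Q n ∧ p ∈ level P n ∧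
          ∃ S : SpecT P, S.1 ⊆ wedgeSet p ∧ (φ S).1 ⊆ wedgeSet q)) ∧
    IsRefinerRel (fun (q : Q) (p : P) => ∃ n,
      angleRel (fun (q' : Q) (p' : P) => q' ∈ level Q n ∧ p' ∈ level P n ∧
        ∃ S : SpecT P, S.1 ⊆ wedgeSet p' ∧ (φ S).1 ⊆ wedgeSet q') q p) ∧
    (∀ (S : SpecT P) (T : SpecT Q),
      (∀ n, ∃ q p, (q ∈ level Q n ∧ p ∈ level P n ∧
          ∃ S' : SpecT P, S'.1 ⊆ wedgeSet p ∧ (φ S').1 ⊆ wedgeSet q) ∧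
        q ∈ T.1 ∧ p ∈ S.1) ↔ T = φ S) ∧
    ∀ D : Set Q, IsCap D → ∃ n, IsCap {p : P | ∃ d ∈ D,
      angleRel (fun (q' : Q) (p' : P) => q' ∈ level Q n ∧ p' ∈ level P n ∧
        ∃ S : SpecT P, S.1 ⊆ wedgeSet p' ∧ (φ S).1 ⊆ wedgeSet q') d p} := by
  refine ⟨fun n => arrSeq_isArrow hP hQ φ n,
    fun n => arrSeq_arrowLe hP hQ φ n,
    ?_, fun S T => arrSeq_graph hP hregP hQ hregQ φ hφ S T, ?_⟩
  · intro C hC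
    obtain ⟨n, hn⟩ := arrSeq_cap hP hregP hQ hregQ φ hφ C hC
    refine ⟨{p : P | ∃ d ∈ C, angleRel (arrSeq φ n) d p},
      ⟨n, fun r hr => ⟨r, hn r hr, le_rfl⟩⟩, ?_⟩
    rintro b ⟨d, hd, hangle⟩
    exact ⟨d, hd, n, hangle⟩
  · intro D hD
    obtain ⟨n, hn⟩ := arrSeq_cap hP hregP hQ hregQ φ hφ D hD
    exact ⟨n, n, fun r hr => ⟨r, hn r hr, le_rfl⟩⟩
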